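/- Consider the dynamic program: cost(s) initialized to w(s) for each disk s ∈ S; for i = 1 to n, set δ_i = min_{s ∈ S, p_i ∈ s} cost(s), then for every disk s with p_i ∉ s reset cost(s) := w(s) + δ_i. Then for every i and every disk s covering p_i, at the start of iteration i we have cost(s) = w(s) + δ_j, where j is the largest index less than i such that p_j ∉ s (and δ_0 = 0, cost(s) = w(s) if s covers all of p_1,…,p_i). -/
import Mathlib


open scoped Classical

/-- One run of the dynamic program of Algorithm 1: `dp S w mem i` is the pair
`(cost function after iteration i, δ_i)`, where `mem i s` means that the point
`p_i` is covered by the disk `s`.  Initially every `cost(s) = w(s)` and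
`δ_0 = 0`; at iteration `i` we set `δ_i = min_{s ∈ S, p_i ∈ s} cost(s)` and
then reset `cost(s) := w(s) + δ_i` for every disk `s` with `p_i ∉ s`. -/
noncomputable def dp {ι : Type*} (S : Finset ι) (w : ι → ℝ)
    (mem : ℕ → ι → Prop) : ℕ → (ι → ℝ) × ℝ
  | 0 => (w, 0)
  | (i + 1) =>
    let c := (dp S w mem i).1
    let δ := sInf {x : ℝ | ∃ s ∈ S, mem (i + 1) s ∧ c s = x}
    (fun s => if mem (i + 1) s then c s else w s + δ, δ)

theorem dp_cost_aux {ι : Type*} (S : Finset ι) (w : ι → ℝ)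
    (mem : ℕ → ι → Prop) (s : ι) :
    ∀ k, (dp S w mem k).1 s =
      w s + (dp S w mem (Nat.findGreatest (fun j => ¬ mem j s) k)).2
  | 0 => by simp [dp]
  | (k + 1) => by
    by_cases h : mem (k + 1) s
    · have hfg : Nat.findGreatest (fun j => ¬ mem j s) (k + 1)
          = Nat.findGreatest (fun j => ¬ mem j s) k := by
        rw [Nat.findGreatest_succ]; simp [h]
      rw [hfg]
      simpa [dp, h] using dp_cost_aux S w mem s k
    · have hfg : Nat.findGreatest (fun j => ¬ mem j s) (k + 1) = k + 1 := by
        rw [Nat.findGreatest_succ]; simp [h]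
      simp [dp, h, hfg]

/-- At the start of iteration `i`, for every disk `s` covering `p_i`,
`cost(s) = w(s) + δ_j` where `j` is the largest index `< i` with `p_j ∉ s`
(`j = 0`, so `δ_j = 0` and `cost(s) = w(s)`, if `s` covers all of
`p_1, …, p_i`). -/
theorem dp_cost_invariant {ι : Type*} (S : Finset ι) (w : ι → ℝ)
    (mem : ℕ → ι → Prop) (n : ℕ)
    (hw : ∀ s ∈ S, 0 < w s)
    (i : ℕ) (h1 : 1 ≤ i) (hn : i ≤ n)
    (s : ι) (hs : s ∈ S) (hcov : mem i s) :
    (dp S w mem (i - 1)).1 s =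
      w s + (dp S w mem (Nat.findGreatest (fun j => ¬ mem j s) (i - 1))).2 := by
  exact dp_cost_aux S w mem s (i - 1)
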